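/- arXiv:math/9901086 — 2 statements merged into one kernel-verified Lean document; each statement's English description precedes it below -/
import Mathlib

section
/- (Characterization of the Poisson operator P_u.) Let a ∈ u(n) be a fixed diagonal matrix and let u, v : ℝ → u(n)_a^⊥ be Schwartz-class maps. Then there exists a unique smooth ṽ : ℝ → u(n) satisfying: (i) π_a^⊥(ṽ(x)) = v(x) for all x; (ii) ṽ_x(x) + [u(x), ṽ(x)] ∈ u(n)_a^⊥ for all x; (iii) ṽ(x) → 0 as x → −∞. Moreover ṽ = v − T_u(v) and P_u(v) = ṽ_x + [u, ṽ]. -/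
open Matrix Filter MeasureTheory
open scoped Classical

attribute [local instance] Matrix.normedAddCommGroup Matrix.normedSpace

/-- A map of `ℝ` into a normed space is of Schwartz class if it is (the underlying function
of) a Schwartz map. -/
def IsSchwartz {E : Type*} [NormedAddCommGroup E] [NormedSpace ℝ E] (f : ℝ → E) : Prop :=
  ∃ φ : SchwartzMap ℝ E, ⇑φ = f

variable {ι : Type*} [Fintype ι] [DecidableEq ι]

/-- The centralizer `u(n)_a = {y ∈ u(n) : [y,a] = 0}` of `a` in `u(n)`. -/
def uCent (a : Matrix ι ι ℂ) : Set (Matrix ι ι ℂ) :=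
  {y | yᴴ = -y ∧ y * a = a * y}

/-- The orthogonal complement `u(n)_a^⊥` of `u(n)_a` in `u(n)` w.r.t. `⟨x,y⟩ = −tr(xy)`. -/
def uPerp (a : Matrix ι ι ℂ) : Set (Matrix ι ι ℂ) :=
  {y | yᴴ = -y ∧ ∀ z ∈ uCent a, -(y * z).trace = 0}

/-- The orthogonal projection `π_a` of `u(n)` onto `u(n)_a` (for `a` diagonal): it keeps
exactly the entries `(i,j)` with `a i i = a j j`. -/
noncomputable def centProj (a y : Matrix ι ι ℂ) : Matrix ι ι ℂ :=
  Matrix.of fun i j => if a i i = a j j then y i j else 0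

/-- The orthogonal projection `π_a^⊥` of `u(n)` onto `u(n)_a^⊥` (for `a` diagonal): it keeps
exactly the entries `(i,j)` with `a i i ≠ a j j`. -/
noncomputable def perpProj (a y : Matrix ι ι ℂ) : Matrix ι ι ℂ :=
  Matrix.of fun i j => if a i i = a j j then 0 else y i j

/-- The integral operator `T_u(v)(x) = ∫_{−∞}^x π_a([u(y), v(y)]) dy`. -/
noncomputable def Tu (a : Matrix ι ι ℂ) (u v : ℝ → Matrix ι ι ℂ) (x : ℝ) : Matrix ι ι ℂ :=
  ∫ y in Set.Iic x, centProj a (u y * v y - v y * u y)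

/-- The Poisson operator `P_u(v) = v_x + π_a^⊥([u,v]) − [u, T_u(v)]`. -/
noncomputable def Pu (a : Matrix ι ι ℂ) (u v : ℝ → Matrix ι ι ℂ) (x : ℝ) : Matrix ι ι ℂ :=
  deriv v x + perpProj a (u x * v x - v x * u x)
    - (u x * Tu a u v x - Tu a u v x * u x)

/-! ### Auxiliary lemmas -/

section Aux

variable {n : ℕ}

lemma centProj_add' (a p q : Matrix (Fin n) (Fin n) ℂ) :
    centProj a (p + q) = centProj a p + centProj a q := by
  ext i j
  simp only [centProj, Matrix.of_apply, Matrix.add_apply]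
  split <;> simp

lemma centProj_smul' (a : Matrix (Fin n) (Fin n) ℂ) (r : ℝ) (p : Matrix (Fin n) (Fin n) ℂ) :
    centProj a (r • p) = r • centProj a p := by
  ext i j
  simp only [centProj, Matrix.of_apply, Matrix.smul_apply]
  split <;> simp

lemma centProj_sub' (a p q : Matrix (Fin n) (Fin n) ℂ) :
    centProj a (p - q) = centProj a p - centProj a q := by
  ext i j
  simp only [centProj, Matrix.of_apply, Matrix.sub_apply]
  split <;> simp

lemma centProj_neg' (a p : Matrix (Fin n) (Fin n) ℂ) :
    centProj a (-p) = -centProj a p := by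
  ext i j
  simp only [centProj, Matrix.of_apply, Matrix.neg_apply]
  split <;> simp

lemma perpProj_sub' (a p q : Matrix (Fin n) (Fin n) ℂ) :
    perpProj a (p - q) = perpProj a p - perpProj a q := by
  ext i j
  simp only [perpProj, Matrix.of_apply, Matrix.sub_apply]
  split <;> simp

/-- `π_a` as a continuous `ℝ`-linear map. -/
noncomputable def centProjL (a : Matrix (Fin n) (Fin n) ℂ) :
    Matrix (Fin n) (Fin n) ℂ →L[ℝ] Matrix (Fin n) (Fin n) ℂ :=
  LinearMap.toContinuousLinearMap
    { toFun := centProj a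
      map_add' := centProj_add' a
      map_smul' := centProj_smul' a }

@[simp] lemma centProjL_apply (a y : Matrix (Fin n) (Fin n) ℂ) :
    centProjL a y = centProj a y := rfl

/-- Conjugate transpose as a continuous `ℝ`-linear map. -/
noncomputable def ctL : Matrix (Fin n) (Fin n) ℂ →L[ℝ] Matrix (Fin n) (Fin n) ℂ :=
  LinearMap.toContinuousLinearMap
    { toFun := fun y => yᴴ
      map_add' := fun x y => conjTranspose_add x y
      map_smul' := fun r x => by
        ext i j
        simp [Matrix.conjTranspose_apply, Matrix.smul_apply, star_smul] }

@[simp] lemma ctL_apply (y : Matrix (Fin n) (Fin n) ℂ) : (ctL y) = yᴴ := rfl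

/-- The commutator with a fixed matrix as a continuous linear map. -/
noncomputable def commL (x : Matrix (Fin n) (Fin n) ℂ) :
    Matrix (Fin n) (Fin n) ℂ →L[ℝ] Matrix (Fin n) (Fin n) ℂ :=
  LinearMap.toContinuousLinearMap
    { toFun := fun y => x * y - y * x
      map_add' := fun y z => by noncomm_ring
      map_smul' := fun r y => by
        simp [mul_smul_comm, smul_mul_assoc, smul_sub] }

@[simp] lemma commL_apply (x y : Matrix (Fin n) (Fin n) ℂ) : commL x y = x * y - y * x := rfl

/-- `(x, y) ↦ π_a [x, y]` as a continuous bilinear map. -/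
noncomputable def bProjL (a : Matrix (Fin n) (Fin n) ℂ) :
    Matrix (Fin n) (Fin n) ℂ →L[ℝ] Matrix (Fin n) (Fin n) ℂ →L[ℝ] Matrix (Fin n) (Fin n) ℂ :=
  LinearMap.toContinuousLinearMap
    { toFun := fun x => (centProjL a).comp (commL x)
      map_add' := fun x x' => by
        ext y
        simp only [ContinuousLinearMap.coe_comp', Function.comp_apply, commL_apply,
          centProjL_apply, ContinuousLinearMap.add_apply]
        rw [← centProj_add']
        congr 1
        noncomm_ring
      map_smul' := fun r x => by
        ext y
        simp only [ContinuousLinearMap.coe_comp', Function.comp_apply, commL_apply,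
          centProjL_apply, RingHom.id_apply, ContinuousLinearMap.smul_apply]
        rw [← centProj_smul']
        congr 1
        simp [smul_mul_assoc, mul_smul_comm, smul_sub] }

@[simp] lemma bProjL_apply (a x y : Matrix (Fin n) (Fin n) ℂ) :
    bProjL a x y = centProj a (x * y - y * x) := rfl

lemma perpProj_eq' (a y : Matrix (Fin n) (Fin n) ℂ) :
    perpProj a y = y - centProj a y := by
  ext i j
  simp only [perpProj, centProj, Matrix.of_apply, Matrix.sub_apply]
  split <;> simp

lemma centProj_idem' (a y : Matrix (Fin n) (Fin n) ℂ) :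
    centProj a (centProj a y) = centProj a y := by
  ext i j
  simp only [centProj, Matrix.of_apply]
  split <;> simp_all

lemma centProj_conjTranspose' (a y : Matrix (Fin n) (Fin n) ℂ) :
    (centProj a y)ᴴ = centProj a yᴴ := by
  ext i j
  by_cases h : a i i = a j j
  · simp only [centProj, Matrix.conjTranspose_apply, Matrix.of_apply, if_pos h, if_pos h.symm]
  · simp only [centProj, Matrix.conjTranspose_apply, Matrix.of_apply, if_neg h,
      if_neg (fun hh : a j j = a i i => h hh.symm), star_zero]

lemma centProj_entry_zero {a y : Matrix (Fin n) (Fin n) ℂ} (h : centProj a y = 0)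
    {i j : Fin n} (hij : a i i = a j j) : y i j = 0 := by
  have := congrFun (congrFun (congrArg
    (fun m : Matrix (Fin n) (Fin n) ℂ => (m : Fin n → Fin n → ℂ)) h) i) j
  simpa [centProj, hij] using this

lemma centProj_mul_left {a p q : Matrix (Fin n) (Fin n) ℂ}
    (hp : centProj a p = 0) (hq : centProj a q = q) :
    centProj a (p * q) = 0 := by
  ext i j
  simp only [centProj, Matrix.of_apply, Matrix.zero_apply]
  split
  case _ h =>
    rw [Matrix.mul_apply]
    refine Finset.sum_eq_zero fun k _ => ?_
    by_cases hk : a k k = a j j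
    · rw [centProj_entry_zero hp (h.trans hk.symm), zero_mul]
    · have : q k j = 0 := by
        have := congrFun (congrFun (congrArg
          (fun m : Matrix (Fin n) (Fin n) ℂ => (m : Fin n → Fin n → ℂ)) hq) k) j
        simpa [centProj, hk] using this.symm
      rw [this, mul_zero]
  case _ h => rfl

lemma centProj_mul_right {a p q : Matrix (Fin n) (Fin n) ℂ}
    (hp : centProj a p = 0) (hq : centProj a q = q) :
    centProj a (q * p) = 0 := by
  ext i j
  simp only [centProj, Matrix.of_apply, Matrix.zero_apply]
  split
  case _ h =>
    rw [Matrix.mul_apply]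
    refine Finset.sum_eq_zero fun k _ => ?_
    by_cases hk : a i i = a k k
    · rw [centProj_entry_zero hp (hk.symm.trans h), mul_zero]
    · have : q i k = 0 := by
        have := congrFun (congrFun (congrArg
          (fun m : Matrix (Fin n) (Fin n) ℂ => (m : Fin n → Fin n → ℂ)) hq) i) k
        simpa [centProj, hk] using this.symm
      rw [this, zero_mul]
  case _ h => rfl

lemma trace_mul_stdBasisMatrix (y : Matrix (Fin n) (Fin n) ℂ) (i j : Fin n) (c : ℂ) :
    (y * Matrix.single j i c).trace = y i j * c := by
  simp [Matrix.trace, Matrix.diag, Matrix.mul_apply, Matrix.single, Matrix.of_apply,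
    mul_ite, ite_and, Finset.sum_ite_eq, Finset.sum_ite_eq']

lemma uCent_entry {a z : Matrix (Fin n) (Fin n) ℂ} (haDiag : a.IsDiag) (hz : z * a = a * z)
    {p q : Fin n} (h : a p p ≠ a q q) : z p q = 0 := by
  have h1 : (z * a) p q = z p q * a q q := by
    rw [Matrix.mul_apply]
    rw [Finset.sum_eq_single q]
    · intro k _ hk
      rw [haDiag hk, mul_zero]
    · intro hq; exact absurd (Finset.mem_univ q) hq
  have h2 : (a * z) p q = a p p * z p q := by
    rw [Matrix.mul_apply]
    rw [Finset.sum_eq_single p]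
    · intro k _ hk
      rw [haDiag (Ne.symm hk), zero_mul]
    · intro hq; exact absurd (Finset.mem_univ p) hq
  have heq : z p q * a q q = a p p * z p q :=
    h1.symm.trans ((congrFun (congrFun (congrArg
      (fun m : Matrix (Fin n) (Fin n) ℂ => (m : Fin n → Fin n → ℂ)) hz) p) q).trans h2)
  have hz2 : z p q * (a q q - a p p) = 0 := by rw [mul_sub, heq]; ring
  rcases mul_eq_zero.mp hz2 with h' | h'
  · exact h'
  · exact absurd (sub_eq_zero.mp h').symm h

lemma stdBasis_conjTranspose (i j : Fin n) (c : ℂ) :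
    (Matrix.single i j c)ᴴ = Matrix.single j i (star c) := by
  ext p q
  simp only [Matrix.conjTranspose_apply, Matrix.single, Matrix.of_apply,
    apply_ite (star : ℂ → ℂ), star_zero]
  exact if_congr and_comm rfl rfl

lemma stdBasis_comm_diag {a : Matrix (Fin n) (Fin n) ℂ} (haDiag : a.IsDiag)
    {i j : Fin n} (h : a i i = a j j) (c : ℂ) :
    Matrix.single i j c * a = a * Matrix.single i j c := by
  ext p q
  rw [Matrix.mul_apply, Matrix.mul_apply]
  rw [Finset.sum_eq_single q (fun k _ hk => by rw [haDiag hk, mul_zero])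
    (fun hq => absurd (Finset.mem_univ q) hq)]
  rw [Finset.sum_eq_single p (fun k _ hk => by rw [haDiag (Ne.symm hk), zero_mul])
    (fun hp => absurd (Finset.mem_univ p) hp)]
  by_cases hp : i = p
  · by_cases hq : j = q
    · subst hp; subst hq
      rw [Matrix.single_apply_same, ← h, mul_comm]
    · have h1 : ¬(i = p ∧ j = q) := fun hh => hq hh.2
      simp [Matrix.single, Matrix.of_apply, h1]
  · have h1 : ¬(i = p ∧ j = q) := fun hh => hp hh.1
    simp [Matrix.single, Matrix.of_apply, h1]

/-- Characterization of `uPerp a` for diagonal `a`: skew-Hermitian matrices whose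
"block" part vanishes. -/
lemma mem_uPerp_iff {a : Matrix (Fin n) (Fin n) ℂ} (haDiag : a.IsDiag)
    {y : Matrix (Fin n) (Fin n) ℂ} :
    y ∈ uPerp a ↔ (yᴴ = -y ∧ centProj a y = 0) := by
  constructor
  · rintro ⟨hskew, horth⟩
    refine ⟨hskew, ?_⟩
    ext i j
    simp only [centProj, Matrix.of_apply, Matrix.zero_apply]
    split
    case _ h =>
      set c := star (y i j) with hc
      set z := Matrix.single j i c - Matrix.single i j (star c) with hzdef
      have hzmem : z ∈ uCent a := by
        constructor
        · rw [hzdef, Matrix.conjTranspose_sub, stdBasis_conjTranspose, stdBasis_conjTranspose,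
            star_star]
          abel
        · rw [hzdef, Matrix.sub_mul, Matrix.mul_sub,
            stdBasis_comm_diag haDiag h.symm, stdBasis_comm_diag haDiag h]
      have h0 := horth z hzmem
      rw [neg_eq_zero, hzdef, Matrix.mul_sub, Matrix.trace_sub,
        trace_mul_stdBasisMatrix, trace_mul_stdBasisMatrix] at h0
      have hyji : y j i = -star (y i j) := by
        have hh := congrFun (congrFun (congrArg
          (fun m : Matrix (Fin n) (Fin n) ℂ => (m : Fin n → Fin n → ℂ)) hskew) i) j
        simp only [Matrix.conjTranspose_apply, Matrix.neg_apply] at hh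
        rw [← star_star (y j i), hh, star_neg]
      rw [hyji, hc, star_star] at h0
      have h2 : y i j * star (y i j) = 0 := by
        have hh : y i j * star (y i j) + y i j * star (y i j) = 0 := by
          rw [← h0]; ring
        exact add_self_eq_zero.mp hh
      have h3 : Complex.normSq (y i j) = 0 := by
        rw [Complex.star_def, Complex.mul_conj] at h2
        exact_mod_cast h2
      exact Complex.normSq_eq_zero.mp h3
    case _ => rfl
  · rintro ⟨hskew, hcent⟩
    refine ⟨hskew, fun z hz => ?_⟩
    rw [neg_eq_zero, Matrix.trace]
    refine Finset.sum_eq_zero fun p _ => ?_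
    rw [Matrix.diag_apply, Matrix.mul_apply]
    refine Finset.sum_eq_zero fun k _ => ?_
    by_cases hk : a p p = a k k
    · rw [centProj_entry_zero hcent hk, zero_mul]
    · rw [uCent_entry haDiag hz.2 (fun hh => hk hh.symm), mul_zero]

end Aux

section AuxAnalytic

variable {E : Type*} [NormedAddCommGroup E] [NormedSpace ℝ E]

lemma schwartz_hasTemperateGrowth (φ : SchwartzMap ℝ E) :
    Function.HasTemperateGrowth ⇑φ := by
  refine ⟨φ.smooth', fun k => ?_⟩
  obtain ⟨C, -, hC⟩ := φ.decay 0 k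
  exact ⟨0, C, fun x => by simpa using hC x⟩

lemma schwartz_Iic_hasDerivAt [CompleteSpace E] (φ : SchwartzMap ℝ E) (x : ℝ) :
    HasDerivAt (fun b => ∫ t in Set.Iic b, φ t) (φ x) x := by
  have hint : Integrable ⇑φ := φ.integrable
  have h1 : (fun b => ∫ t in Set.Iic b, φ t)
      = fun b => (∫ t in Set.Iic (0:ℝ), φ t) + ∫ t in (0:ℝ)..b, φ t := by
    funext b
    rw [← intervalIntegral.integral_Iic_sub_Iic hint.integrableOn hint.integrableOn]
    abel
  rw [h1]
  exact ((φ.continuous.integral_hasStrictDerivAt 0 x).hasDerivAt).const_add _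

lemma schwartz_Iic_tendsto_atBot [CompleteSpace E] (φ : SchwartzMap ℝ E) :
    Tendsto (fun b => ∫ t in Set.Iic b, φ t) atBot (nhds 0) := by
  have hint : Integrable ⇑φ := φ.integrable
  have hanti : Antitone (fun m : ℝ => Set.Iic (-m)) :=
    fun m m' h => Set.Iic_subset_Iic.mpr (by linarith)
  have hiInter : (⋂ m : ℝ, Set.Iic (-m)) = (∅ : Set ℝ) := by
    ext t
    simp only [Set.mem_iInter, Set.mem_Iic, Set.mem_empty_iff_false, iff_false, not_forall]
    exact ⟨-(t - 1), by push_neg; linarith⟩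
  have h1 := tendsto_setIntegral_of_antitone (f := ⇑φ) (μ := volume)
    (fun m : ℝ => measurableSet_Iic) hanti ⟨0, hint.integrableOn⟩
  rw [hiInter] at h1
  simp only [Measure.restrict_empty, integral_zero_measure] at h1
  have heq : (fun b : ℝ => ∫ t in Set.Iic b, φ t)
      = (fun m : ℝ => ∫ t in Set.Iic (-m), φ t) ∘ (fun b => -b) := by
    funext b; simp
  rw [heq]
  exact h1.comp tendsto_neg_atBot_atTop

end AuxAnalytic

/-- Characterization of the Poisson operator `P_u`: for `a ∈ u(n)` diagonal and
Schwartz-class `u, v : ℝ → u(n)_a^⊥` there is a unique smooth `ṽ : ℝ → u(n)` with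
`π_a^⊥(ṽ) = v`, `ṽ_x + [u, ṽ] ∈ u(n)_a^⊥`, and `ṽ → 0` at `−∞`; moreover `ṽ = v − T_u(v)`
and `P_u(v) = ṽ_x + [u, ṽ]`. -/
theorem stmt7 (n : ℕ)
    (a : Matrix (Fin n) (Fin n) ℂ) (haDiag : a.IsDiag) (haSkew : aᴴ = -a)
    (u v : ℝ → Matrix (Fin n) (Fin n) ℂ)
    (huS : IsSchwartz u) (hvS : IsSchwartz v)
    (huP : ∀ x, u x ∈ uPerp a) (hvP : ∀ x, v x ∈ uPerp a) :
    -- existence and uniqueness of ṽ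
    (∃! w : ℝ → Matrix (Fin n) (Fin n) ℂ,
      ContDiff ℝ (⊤ : ℕ∞) w ∧ (∀ x, (w x)ᴴ = -(w x)) ∧
      (∀ x, perpProj a (w x) = v x) ∧
      (∀ x, deriv w x + (u x * w x - w x * u x) ∈ uPerp a) ∧
      Tendsto w atBot (nhds 0)) ∧
    -- ṽ = v − T_u(v), i.e. v − T_u(v) satisfies all the above conditions
    (ContDiff ℝ (⊤ : ℕ∞) (fun x => v x - Tu a u v x) ∧
      (∀ x, (v x - Tu a u v x)ᴴ = -(v x - Tu a u v x)) ∧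
      (∀ x, perpProj a (v x - Tu a u v x) = v x) ∧
      (∀ x, deriv (fun y => v y - Tu a u v y) x
          + (u x * (v x - Tu a u v x) - (v x - Tu a u v x) * u x) ∈ uPerp a) ∧
      Tendsto (fun x => v x - Tu a u v x) atBot (nhds 0)) ∧
    -- P_u(v) = ṽ_x + [u, ṽ]
    (∀ x, Pu a u v x
        = deriv (fun y => v y - Tu a u v y) x
          + (u x * (v x - Tu a u v x) - (v x - Tu a u v x) * u x)) := by
  classical
  obtain ⟨φu, hφu⟩ := huS
  obtain ⟨φv, hφv⟩ := hvS
  -- the Schwartz map `x ↦ π_a [u x, v x]`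
  set φg : SchwartzMap ℝ (Matrix (Fin n) (Fin n) ℂ) :=
    SchwartzMap.bilinLeftCLM (bProjL a) (schwartz_hasTemperateGrowth φv) φu with hφgdef
  have hφg : ∀ x, φg x = centProj a (u x * v x - v x * u x) := by
    intro x
    have h0 : φg x = bProjL a (φu x) (φv x) := rfl
    rw [h0, hφu, hφv, bProjL_apply]
  -- basic facts about `u`, `v`
  have huSkew : ∀ x, (u x)ᴴ = -(u x) := fun x => (huP x).1
  have hvSkew : ∀ x, (v x)ᴴ = -(v x) := fun x => (hvP x).1
  have hcentu : ∀ x, centProj a (u x) = 0 := fun x => ((mem_uPerp_iff haDiag).mp (huP x)).2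
  have hcentv : ∀ x, centProj a (v x) = 0 := fun x => ((mem_uPerp_iff haDiag).mp (hvP x)).2
  have hvCont : ContDiff ℝ (⊤ : ℕ∞) v := hφv ▸ φv.smooth ⊤
  have hle1 : (1 : WithTop ℕ∞) ≤ ((⊤ : ℕ∞) : WithTop ℕ∞) := by exact_mod_cast le_top
  have hvDiff : Differentiable ℝ v := hvCont.differentiable (by simp)
  have hvderiv : ∀ x, HasDerivAt v (deriv v x) x := fun x => (hvDiff x).hasDerivAt
  -- `Tu` as integral of `φg`
  have hTu_eq : Tu a u v = fun b => ∫ t in Set.Iic b, φg t := by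
    funext b
    unfold Tu
    congr 1
    exact funext fun t => (hφg t).symm
  have hTuDeriv : ∀ x, HasDerivAt (Tu a u v) (φg x) x := by
    intro x
    rw [hTu_eq]
    exact schwartz_Iic_hasDerivAt φg x
  have hTuSmooth : ContDiff ℝ (⊤ : ℕ∞) (Tu a u v) := by
    rw [contDiff_infty_iff_deriv]
    refine ⟨fun x => (hTuDeriv x).differentiableAt, ?_⟩
    have : deriv (Tu a u v) = ⇑φg := funext fun x => (hTuDeriv x).deriv
    show ContDiff ℝ (⊤ : ℕ∞) (deriv (Tu a u v))
    rw [this]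
    exact φg.smooth ⊤
  -- skewness of `φg`
  have hφgskew : ∀ x, (φg x)ᴴ = -(φg x) := by
    intro x
    rw [hφg x, centProj_conjTranspose']
    have h1 : (u x * v x - v x * u x)ᴴ = -(u x * v x - v x * u x) := by
      rw [Matrix.conjTranspose_sub, Matrix.conjTranspose_mul, Matrix.conjTranspose_mul,
        huSkew x, hvSkew x]
      simp only [Matrix.neg_mul, Matrix.mul_neg, neg_neg]
      abel
    rw [h1]
    rw [centProj_neg' a (u x * v x - v x * u x), ← hφg x]
  have hφgcent : ∀ x, centProj a (φg x) = φg x := by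
    intro x
    rw [hφg x]
    exact centProj_idem' a _
  -- skewness and cent-support of `Tu`
  have hTuskew : ∀ x, (Tu a u v x)ᴴ = -(Tu a u v x) := by
    intro x
    rw [hTu_eq]
    have h1 : (∫ t in Set.Iic x, φg t)ᴴ = ∫ t in Set.Iic x, (φg t)ᴴ :=
      ((ctL.integral_comp_comm ((φg.integrable (μ := volume)).restrict)).symm :)
    rw [h1]
    simp only [hφgskew]
    rw [integral_neg]
  have hTucent : ∀ x, centProj a (Tu a u v x) = Tu a u v x := by
    intro x
    rw [hTu_eq]
    have h1 : centProj a (∫ t in Set.Iic x, φg t) = ∫ t in Set.Iic x, centProj a (φg t) :=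
      (((centProjL a).integral_comp_comm ((φg.integrable (μ := volume)).restrict)).symm :)
    rw [h1]
    simp only [hφgcent]
  -- the candidate `w`
  have hwSmooth : ContDiff ℝ (⊤ : ℕ∞) (fun x => v x - Tu a u v x) := hvCont.sub hTuSmooth
  have hwSkew : ∀ x, (v x - Tu a u v x)ᴴ = -(v x - Tu a u v x) := by
    intro x
    rw [Matrix.conjTranspose_sub, hvSkew x, hTuskew x]
    abel
  have hperpW : ∀ x, perpProj a (v x - Tu a u v x) = v x := by
    intro x
    rw [perpProj_sub', perpProj_eq', perpProj_eq', hcentv x, hTucent x]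
    abel
  have hwderiv : ∀ x, HasDerivAt (fun y => v y - Tu a u v y) (deriv v x - φg x) x :=
    fun x => (hvderiv x).sub (hTuDeriv x)
  have hwderiv' : ∀ x, deriv (fun y => v y - Tu a u v y) x = deriv v x - φg x :=
    fun x => (hwderiv x).deriv
  -- skewness and cent-support of `deriv v`
  have hvderivskew : ∀ x, (deriv v x)ᴴ = -(deriv v x) := by
    intro x
    have h1 : HasDerivAt (fun y => ctL (v y)) (ctL (deriv v x)) x :=
      ctL.hasFDerivAt.comp_hasDerivAt x (hvderiv x)
    have h2 : (fun y => ctL (v y)) = fun y => -(v y) := funext fun y => by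
      rw [ctL_apply, hvSkew y]
    rw [h2] at h1
    have h3 : HasDerivAt (fun y => -(v y)) (-(deriv v x)) x := (hvderiv x).neg
    exact h1.unique h3
  have hvderivcent : ∀ x, centProj a (deriv v x) = 0 := by
    intro x
    have h1 : HasDerivAt (fun y => centProjL a (v y)) (centProjL a (deriv v x)) x :=
      (centProjL a).hasFDerivAt.comp_hasDerivAt x (hvderiv x)
    have h2 : (fun y => centProjL a (v y)) = fun _ => (0 : Matrix (Fin n) (Fin n) ℂ) :=
      funext fun y => by rw [centProjL_apply, hcentv y]
    rw [h2] at h1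
    exact h1.unique (hasDerivAt_const x 0)
  -- rearrangement of the derivative condition
  have hE : ∀ x, deriv (fun y => v y - Tu a u v y) x
      + (u x * (v x - Tu a u v x) - (v x - Tu a u v x) * u x)
      = (deriv v x - φg x)
        + ((u x * v x - v x * u x) - (u x * Tu a u v x - Tu a u v x * u x)) := by
    intro x
    rw [hwderiv' x]
    congr 1
    noncomm_ring
  have hmemderiv : ∀ x, deriv (fun y => v y - Tu a u v y) x
      + (u x * (v x - Tu a u v x) - (v x - Tu a u v x) * u x) ∈ uPerp a := by
    intro x
    rw [hE x]
    refine (mem_uPerp_iff haDiag).mpr ⟨?_, ?_⟩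
    · simp only [Matrix.conjTranspose_add, Matrix.conjTranspose_sub, Matrix.conjTranspose_mul,
        hvderivskew x, hφgskew x, huSkew x, hvSkew x, hTuskew x,
        Matrix.neg_mul, Matrix.mul_neg, neg_neg]
      abel
    · have hφg' : centProj a (u x * v x) - centProj a (v x * u x) = φg x := by
        rw [hφg x, centProj_sub']
      simp only [centProj_add', centProj_sub']
      rw [hvderivcent x, hφgcent x, hφg',
        centProj_mul_left (hcentu x) (hTucent x), centProj_mul_right (hcentu x) (hTucent x)]
      abel
  -- decay at `-∞`
  have hvtend : Tendsto v atBot (nhds 0) := by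
    have h1 : Tendsto v (Filter.cocompact ℝ) (nhds 0) := by
      rw [← hφv]
      exact φv.toZeroAtInfty.zero_at_infty'
    exact h1.mono_left atBot_le_cocompact
  have hTutend : Tendsto (Tu a u v) atBot (nhds 0) := by
    rw [hTu_eq]
    exact schwartz_Iic_tendsto_atBot φg
  have hwtend : Tendsto (fun x => v x - Tu a u v x) atBot (nhds 0) := by
    have := hvtend.sub hTutend
    simpa using this
  -- the `Pu` identity
  have hPu : ∀ x, Pu a u v x
      = deriv (fun y => v y - Tu a u v y) x
        + (u x * (v x - Tu a u v x) - (v x - Tu a u v x) * u x) := by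
    intro x
    rw [hE x]
    unfold Pu
    rw [perpProj_eq', ← hφg x]
    abel
  -- uniqueness
  have huniq : ∀ w' : ℝ → Matrix (Fin n) (Fin n) ℂ,
      (ContDiff ℝ (⊤ : ℕ∞) w' ∧ (∀ x, (w' x)ᴴ = -(w' x)) ∧
        (∀ x, perpProj a (w' x) = v x) ∧
        (∀ x, deriv w' x + (u x * w' x - w' x * u x) ∈ uPerp a) ∧
        Tendsto w' atBot (nhds 0)) →
      w' = fun y => v y - Tu a u v y := by
    rintro w' ⟨hw's, hw'skew, hw'perp, hw'mem, hw'tend⟩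
    set d := fun y => w' y - (v y - Tu a u v y) with hddef
    have hw'Diff : Differentiable ℝ w' := hw's.differentiable (by simp)
    have hw'deriv : ∀ x, HasDerivAt w' (deriv w' x) x := fun x => (hw'Diff x).hasDerivAt
    have hdderiv : ∀ x, HasDerivAt d (deriv w' x - (deriv v x - φg x)) x :=
      fun x => (hw'deriv x).sub (hwderiv x)
    have hdDiff : Differentiable ℝ d := fun x => (hdderiv x).differentiableAt
    have hdperp : ∀ x, perpProj a (d x) = 0 := by
      intro x
      rw [hddef]
      simp only
      rw [perpProj_sub', hw'perp x, hperpW x, sub_self]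
    have hdcent : ∀ x, centProj a (d x) = d x := by
      intro x
      have h1 := perpProj_eq' a (d x)
      rw [hdperp x] at h1
      exact (sub_eq_zero.mp h1.symm).symm
    have hdderivcent : ∀ x, centProj a (deriv w' x - (deriv v x - φg x))
        = deriv w' x - (deriv v x - φg x) := by
      intro x
      have h1 : HasDerivAt (fun y => centProjL a (d y))
          (centProjL a (deriv w' x - (deriv v x - φg x))) x :=
        (centProjL a).hasFDerivAt.comp_hasDerivAt x (hdderiv x)
      have h2 : (fun y => centProjL a (d y)) = d :=
        funext fun y => by rw [centProjL_apply, hdcent y]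
      rw [h2] at h1
      exact h1.unique (hdderiv x)
    have hDzero : ∀ x, deriv w' x - (deriv v x - φg x) = 0 := by
      intro x
      have h1 := ((mem_uPerp_iff haDiag).mp (hw'mem x)).2
      have h2 := ((mem_uPerp_iff haDiag).mp (hmemderiv x)).2
      rw [hE x] at h2
      have hEq : (deriv w' x - (deriv v x - φg x)) + (u x * d x - d x * u x)
          = (deriv w' x + (u x * w' x - w' x * u x))
            - ((deriv v x - φg x)
              + ((u x * v x - v x * u x) - (u x * Tu a u v x - Tu a u v x * u x))) := by
        rw [hddef]
        simp only
        noncomm_ring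
      have h3 : centProj a ((deriv w' x - (deriv v x - φg x)) + (u x * d x - d x * u x)) = 0 := by
        rw [hEq, centProj_sub', h1, h2, sub_self]
      rw [centProj_add', hdderivcent x, centProj_sub',
        centProj_mul_left (hcentu x) (hdcent x), centProj_mul_right (hcentu x) (hdcent x),
        sub_self, add_zero] at h3
      exact h3
    have hdconst : ∀ x y : ℝ, d x = d y := by
      refine is_const_of_deriv_eq_zero hdDiff fun x => ?_
      rw [(hdderiv x).deriv, hDzero x]
    have hdtend : Tendsto d atBot (nhds 0) := by
      have := hw'tend.sub hwtend
      simpa using this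
    have hdzero : ∀ x, d x = 0 := by
      intro x
      have hdc : d = fun _ => d x := funext fun y => hdconst y x
      rw [hdc] at hdtend
      exact tendsto_nhds_unique tendsto_const_nhds hdtend
    funext x
    have := hdzero x
    rw [hddef] at this
    simp only at this
    exact sub_eq_zero.mp this
  exact ⟨⟨fun y => v y - Tu a u v y,
      ⟨hwSmooth, hwSkew, hperpW, hmemderiv, hwtend⟩, huniq⟩,
    ⟨hwSmooth, hwSkew, hperpW, hmemderiv, hwtend⟩, hPu⟩
end

section
/- (Injectivity of the Poisson operator.) Let a ∈ u(n) be a fixed diagonal matrix and let u, v : ℝ → u(n)_a^⊥ be Schwartz-class maps. If P_u(v) = 0 identically, then v = 0. -/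
open Matrix Filter MeasureTheory
open scoped Classical

attribute [local instance] Matrix.normedAddCommGroup Matrix.normedSpace

variable {ι : Type*} [Fintype ι] [DecidableEq ι]

open scoped Topology

section Aux

noncomputable instance matContinuousENorm (n : ℕ) : ContinuousENorm (Matrix (Fin n) (Fin n) ℂ) :=
  SeminormedAddGroup.toContinuousENorm

instance matPseudoMetrizable (n : ℕ) :
    TopologicalSpace.PseudoMetrizableSpace (Matrix (Fin n) (Fin n) ℂ) :=
  inferInstanceAs (TopologicalSpace.PseudoMetrizableSpace (Fin n → Fin n → ℂ))

noncomputable def eCLM (n : ℕ) (i j : Fin n) : Matrix (Fin n) (Fin n) ℂ →L[ℝ] ℂ :=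
  LinearMap.mkContinuous
    { toFun := fun m => m i j, map_add' := fun _ _ => rfl, map_smul' := fun _ _ => rfl }
    1 (fun m => by show ‖m i j‖ ≤ 1 * ‖m‖; simpa using m.norm_entry_le_entrywise_sup_norm)

lemma eCLM_apply (n : ℕ) (i j : Fin n) (m : Matrix (Fin n) (Fin n) ℂ) :
    eCLM n i j m = m i j := rfl

lemma entry_integral {n : ℕ} (i j : Fin n) (f : ℝ → Matrix (Fin n) (Fin n) ℂ) (s : Set ℝ)
    (hf : IntegrableOn f s volume) :
    (∫ y in s, f y) i j = ∫ y in s, f y i j :=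
  ((eCLM n i j).integral_comp_comm hf).symm

lemma norm_matrix_mul_le {n : ℕ} (A B : Matrix (Fin n) (Fin n) ℂ) :
    ‖A * B‖ ≤ n * ‖A‖ * ‖B‖ := by
  rw [Matrix.norm_le_iff (by positivity)]
  intro i j
  rw [Matrix.mul_apply]
  calc ‖∑ k, A i k * B k j‖ ≤ ∑ k, ‖A i k * B k j‖ := norm_sum_le _ _
    _ ≤ ∑ _k : Fin n, ‖A‖ * ‖B‖ := by
        refine Finset.sum_le_sum fun k _ => ?_
        rw [norm_mul]
        exact mul_le_mul (A.norm_entry_le_entrywise_sup_norm)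
          (B.norm_entry_le_entrywise_sup_norm) (norm_nonneg _) (norm_nonneg _)
    _ = n * ‖A‖ * ‖B‖ := by simp [mul_assoc]

lemma norm_centProj_le {n : ℕ} (a m : Matrix (Fin n) (Fin n) ℂ) :
    ‖centProj a m‖ ≤ ‖m‖ := by
  rw [Matrix.norm_le_iff (norm_nonneg _)]
  intro i j
  simp only [centProj, Matrix.of_apply]
  by_cases h : a i i = a j j
  · rw [if_pos h]; exact m.norm_entry_le_entrywise_sup_norm
  · rw [if_neg h]; simp

lemma trace_double_sum {n : ℕ} (A B : Matrix (Fin n) (Fin n) ℂ) :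
    (A * B).trace = ∑ i, ∑ j, A i j * B j i := by
  simp [Matrix.trace, Matrix.mul_apply, Matrix.diag]

lemma stdBasisMatrix_conjT {n : ℕ} (i j : Fin n) (c : ℂ) :
    (Matrix.single i j c)ᴴ = Matrix.single j i ((starRingEnd ℂ) c) := by
  ext p q
  simp only [Matrix.conjTranspose_apply, Matrix.single, Matrix.of_apply, RCLike.star_def]
  rw [apply_ite (starRingEnd ℂ), map_zero]
  by_cases h1 : i = q <;> by_cases h2 : j = p <;> simp [h1, h2]

lemma skew_entry {n : ℕ} {M : Matrix (Fin n) (Fin n) ℂ} (hM : Mᴴ = -M) (i j : Fin n) :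
    M j i = -(starRingEnd ℂ) (M i j) := by
  have h1 := congrFun (congrFun hM j) i
  simp only [Matrix.conjTranspose_apply, Matrix.neg_apply, RCLike.star_def] at h1
  linear_combination h1

lemma trace_mul_std {n : ℕ} (y : Matrix (Fin n) (Fin n) ℂ) (i j : Fin n) (c : ℂ) :
    (y * Matrix.single j i c).trace = y i j * c := by
  rw [Matrix.trace]
  rw [Finset.sum_eq_single i]
  · simp [Matrix.diag]
  · intro k _ hk
    exact Matrix.mul_single_apply_of_ne (c := c) (i := j) (j := i) (a := k) (b := k) (hbj := hk) (M := y)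
  · simp

/-- Membership in `uPerp a` for `a` diagonal forces vanishing on the centralizer pattern. -/
lemma uPerp_pattern {n : ℕ} {a : Matrix (Fin n) (Fin n) ℂ} (haDiag : a.IsDiag)
    {y : Matrix (Fin n) (Fin n) ℂ} (hy : y ∈ uPerp a) {i j : Fin n}
    (hij : a i i = a j j) : y i j = 0 := by
  obtain ⟨hskew, htr⟩ := hy
  have hyji : y j i = -(starRingEnd ℂ) (y i j) := by
    have h1 := congrFun (congrFun hskew j) i
    simp only [Matrix.conjTranspose_apply, Matrix.neg_apply] at h1
    rw [RCLike.star_def] at h1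
    linear_combination h1
  have key : ∀ c : ℂ, y i j * c + (starRingEnd ℂ) (y i j) * (starRingEnd ℂ) c = 0 := by
    intro c
    have hd : a.diag i = a.diag j := hij
    have hz : (Matrix.single j i c
        - Matrix.single i j ((starRingEnd ℂ) c)) ∈ uCent a := by
      constructor
      · rw [Matrix.conjTranspose_sub, stdBasisMatrix_conjT, stdBasisMatrix_conjT,
          Complex.conj_conj]
        exact (neg_sub _ _).symm
      · have ha' : a = Matrix.diagonal (Matrix.diag a) := haDiag.diagonal_diag.symm
        rw [ha']
        ext p q
        rw [Matrix.mul_diagonal, Matrix.diagonal_mul]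
        simp only [Matrix.sub_apply, Matrix.single, Matrix.of_apply]
        split_ifs with h1 h2 h2
        · obtain ⟨rfl, rfl⟩ := h1
          obtain ⟨rfl, -⟩ := h2
          ring
        · obtain ⟨rfl, rfl⟩ := h1
          rw [hd]; ring
        · obtain ⟨rfl, rfl⟩ := h2
          rw [hd]; ring
        · ring
    have h0 := htr _ hz
    rw [neg_eq_zero, Matrix.mul_sub, Matrix.trace_sub, trace_mul_std, trace_mul_std] at h0
    rw [hyji] at h0
    linear_combination h0
  have k1 := key 1
  have k2 := key Complex.I
  rw [_root_.map_one, mul_one, mul_one] at k1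
  rw [Complex.conj_I] at k2
  linear_combination k1 / 2 - (Complex.I / 2) * k2 + ((y i j - (starRingEnd ℂ) (y i j)) / 2) * Complex.I_sq

/-- Algebraic cancellation in the energy derivative. -/
lemma alg_cancel {n : ℕ} (U V W C : Matrix (Fin n) (Fin n) ℂ) (hC : C = U*V - V*U) :
    ((U*W - W*U - C) * V).trace + (V * (U*W - W*U - C)).trace
      + (C*W).trace + (W*C).trace = 0 := by
  subst hC
  simp only [Matrix.sub_mul, Matrix.mul_sub, Matrix.trace_sub, Matrix.trace_add]
  have h1 := Matrix.trace_mul_comm (U*W) V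
  have h2 := Matrix.trace_mul_comm (W*U) V
  have h3 := Matrix.trace_mul_comm (U*V) V
  have h4 := Matrix.trace_mul_comm (V*U) V
  have h5 := Matrix.trace_mul_comm (U*V) W
  have h6 := Matrix.trace_mul_comm (V*U) W
  have h7 := Matrix.trace_mul_comm U (V*V)
  have h8 := Matrix.trace_mul_comm V (U*W)
  have h9 := Matrix.trace_mul_comm V (W*U)
  simp only [Matrix.mul_assoc] at *
  linear_combination h1 + h6 - h7 + h5 - h9

end Aux

/-- Injectivity of the Poisson operator: for `a ∈ u(n)` diagonal and
Schwartz-class `u, v : ℝ → u(n)_a^⊥`, if `P_u(v) = 0` identically then `v = 0`. -/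
theorem stmt8 (n : ℕ)
    (a : Matrix (Fin n) (Fin n) ℂ) (haDiag : a.IsDiag) (haSkew : aᴴ = -a)
    (u v : ℝ → Matrix (Fin n) (Fin n) ℂ)
    (huS : IsSchwartz u) (hvS : IsSchwartz v)
    (huP : ∀ x, u x ∈ uPerp a) (hvP : ∀ x, v x ∈ uPerp a)
    (hPu : ∀ x, Pu a u v x = 0) :
    v = 0 := by
  obtain ⟨φu, hφu⟩ := huS
  obtain ⟨φv, hφv⟩ := hvS
  have hucont : Continuous u := hφu ▸ φu.continuous
  have hvcont : Continuous v := hφv ▸ φv.continuous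
  set h : ℝ → Matrix (Fin n) (Fin n) ℂ := fun y => centProj a (u y * v y - v y * u y) with hh
  -- continuity of the integrand
  have hcont : Continuous h := by
    apply continuous_matrix
    intro i j
    simp only [hh, centProj, Matrix.of_apply]
    by_cases hc : a i i = a j j
    · simp only [if_pos hc]
      exact ((hucont.matrix_mul hvcont).sub (hvcont.matrix_mul hucont)).matrix_elem i j
    · simp only [if_neg hc]
      exact continuous_const
  -- integrability of the integrand
  obtain ⟨Cu, hCu⟩ : ∃ C, ∀ x, ‖u x‖ ≤ C := by
    refine ⟨‖φu.toBoundedContinuousFunction‖, fun x => ?_⟩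
    have := φu.toBoundedContinuousFunction.norm_coe_le_norm x
    simpa [hφu] using this
  have hCu0 : (0:ℝ) ≤ Cu := le_trans (norm_nonneg _) (hCu 0)
  have hInt : Integrable h volume := by
    have hvint : Integrable v volume := hφv ▸ φv.integrable
    refine ((hvint.norm.const_mul (2 * n * Cu)).mono' hcont.aestronglyMeasurable ?_)
    filter_upwards with y
    calc ‖h y‖ ≤ ‖u y * v y - v y * u y‖ := norm_centProj_le _ _
      _ ≤ ‖u y * v y‖ + ‖v y * u y‖ := norm_sub_le _ _
      _ ≤ n * ‖u y‖ * ‖v y‖ + n * ‖v y‖ * ‖u y‖ :=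
          add_le_add (norm_matrix_mul_le _ _) (norm_matrix_mul_le _ _)
      _ ≤ 2 * ↑n * Cu * ‖v y‖ := by
          have hle : ‖u y‖ * ‖v y‖ ≤ Cu * ‖v y‖ :=
            mul_le_mul_of_nonneg_right (hCu y) (norm_nonneg _)
          nlinarith [mul_le_mul_of_nonneg_left hle (Nat.cast_nonneg (α := ℝ) n)]
  -- fundamental theorem of calculus for `Tu`
  have hTuEq : Tu a u v = fun x => (∫ y in Set.Iic (0:ℝ), h y) + ∫ y in (0:ℝ)..x, h y := by
    funext x
    have hsub := intervalIntegral.integral_Iic_sub_Iic (hInt.integrableOn) (hInt.integrableOn)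
      (f := h) (μ := volume) (a := (0:ℝ)) (b := x)
    show (∫ y in Set.Iic x, h y) = _
    rw [← hsub]
    abel
  have hTud : ∀ x, HasDerivAt (Tu a u v) (h x) x := by
    intro x
    rw [hTuEq]
    exact (intervalIntegral.integral_hasDerivAt_right (hInt.intervalIntegrable)
      (hcont.stronglyMeasurableAtFilter _ _) hcont.continuousAt).const_add _
  -- entries of `Tu`
  have hwEntry : ∀ (x : ℝ) (i j : Fin n), Tu a u v x i j = ∫ y in Set.Iic x, h y i j := by
    intro x i j
    exact entry_integral i j h (Set.Iic x) hInt.integrableOn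
  have hwPat : ∀ (x : ℝ) (i j : Fin n), ¬(a i i = a j j) → Tu a u v x i j = 0 := by
    intro x i j hij
    rw [hwEntry x i j]
    have hz : ∀ y : ℝ, h y i j = 0 := fun y => by simp [hh, centProj, hij]
    simp [hz]
  -- skewness of the integrand and of `Tu`
  have hcskew : ∀ y : ℝ, (u y * v y - v y * u y)ᴴ = -(u y * v y - v y * u y) := by
    intro y
    rw [Matrix.conjTranspose_sub, Matrix.conjTranspose_mul, Matrix.conjTranspose_mul,
      (huP y).1, (hvP y).1]
    simp only [Matrix.neg_mul, Matrix.mul_neg, neg_neg]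
    exact (neg_sub _ _).symm
  have hhskew : ∀ (y : ℝ) (i j : Fin n), h y j i = -(starRingEnd ℂ) (h y i j) := by
    intro y i j
    simp only [hh, centProj, Matrix.of_apply]
    by_cases hc : a i i = a j j
    · rw [if_pos hc.symm, if_pos hc]
      exact skew_entry (hcskew y) i j
    · rw [if_neg (fun hcc => hc hcc.symm), if_neg hc]
      simp
  have hwSkew : ∀ (x : ℝ) (i j : Fin n),
      Tu a u v x j i = -(starRingEnd ℂ) (Tu a u v x i j) := by
    intro x i j
    rw [hwEntry x j i, hwEntry x i j, ← integral_conj, ← MeasureTheory.integral_neg]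
    exact MeasureTheory.integral_congr_ae (Filter.Eventually.of_forall fun y => hhskew y i j)
  -- the derivative of `v` from the Poisson equation
  have hvdiff : Differentiable ℝ v := hφv ▸ φv.differentiable
  have hvd : ∀ x, HasDerivAt v (u x * Tu a u v x - Tu a u v x * u x
      - perpProj a (u x * v x - v x * u x)) x := by
    intro x
    have h1 := (hvdiff x).hasDerivAt
    have h2 : deriv v x + perpProj a (u x * v x - v x * u x)
        - (u x * Tu a u v x - Tu a u v x * u x) = 0 := hPu x
    have h3 : deriv v x = u x * Tu a u v x - Tu a u v x * u x
        - perpProj a (u x * v x - v x * u x) := by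
      have h4 : deriv v x - (u x * Tu a u v x - Tu a u v x * u x
          - perpProj a (u x * v x - v x * u x)) = deriv v x
          + perpProj a (u x * v x - v x * u x)
          - (u x * Tu a u v x - Tu a u v x * u x) := by abel
      rw [← sub_eq_zero, h4]
      exact h2
    exact h3 ▸ h1
  -- the energy function
  set F : ℝ → ℂ := fun x => ∑ i, ∑ j,
    (v x i j * v x j i + Tu a u v x i j * Tu a u v x j i) with hF
  have hFd : ∀ x, HasDerivAt F 0 x := by
    intro x
    set U := u x with hU
    set V := v x with hV
    set W := Tu a u v x with hW
    set C := U * V - V * U with hC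
    set v' := U * W - W * U - perpProj a C with hv'
    have hvde : ∀ i j : Fin n, HasDerivAt (fun t => v t i j) (v' i j) x := by
      intro i j
      exact (eCLM n i j).hasFDerivAt.comp_hasDerivAt x (hvd x)
    have hwde : ∀ i j : Fin n, HasDerivAt (fun t => Tu a u v t i j) (h x i j) x := by
      intro i j
      exact (eCLM n i j).hasFDerivAt.comp_hasDerivAt x (hTud x)
    have big : HasDerivAt F (∑ i, ∑ j, ((v' i j * V j i + V i j * v' j i)
        + (h x i j * W j i + W i j * h x j i))) x := by
      apply HasDerivAt.fun_sum
      intro i _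
      apply HasDerivAt.fun_sum
      intro j _
      exact ((hvde i j).mul (hvde j i)).add ((hwde i j).mul (hwde j i))
    have claim1 : (perpProj a C * V).trace = (C * V).trace := by
      rw [trace_double_sum, trace_double_sum]
      refine Finset.sum_congr rfl fun i _ => Finset.sum_congr rfl fun j _ => ?_
      by_cases hc : a i i = a j j
      · have hV0 : V j i = 0 := uPerp_pattern haDiag (hvP x) hc.symm
        rw [hV0, mul_zero, mul_zero]
      · simp [perpProj, hc]
    have claim2 : (centProj a C * W).trace = (C * W).trace := by
      rw [trace_double_sum, trace_double_sum]
      refine Finset.sum_congr rfl fun i _ => Finset.sum_congr rfl fun j _ => ?_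
      by_cases hc : a i i = a j j
      · simp [centProj, hc]
      · have hW0 : W j i = 0 := hwPat x j i (fun hcc => hc hcc.symm)
        rw [hW0, mul_zero, mul_zero]
    have hhx : h x = centProj a C := rfl
    have hzero : (∑ i, ∑ j, ((v' i j * V j i + V i j * v' j i)
        + (h x i j * W j i + W i j * h x j i))) = 0 := by
      have e0 : (∑ i, ∑ j, ((v' i j * V j i + V i j * v' j i)
          + (h x i j * W j i + W i j * h x j i)))
          = (v' * V).trace + (V * v').trace + (h x * W).trace + (W * h x).trace := by
        rw [trace_double_sum, trace_double_sum, trace_double_sum, trace_double_sum,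
          ← Finset.sum_add_distrib, ← Finset.sum_add_distrib, ← Finset.sum_add_distrib]
        refine Finset.sum_congr rfl fun i _ => ?_
        rw [← Finset.sum_add_distrib, ← Finset.sum_add_distrib, ← Finset.sum_add_distrib]
        refine Finset.sum_congr rfl fun j _ => ?_
        ring
      rw [e0, hhx, hv']
      have tmc1 : (V * perpProj a C).trace = (V * C).trace := by
        rw [Matrix.trace_mul_comm V (perpProj a C), claim1, Matrix.trace_mul_comm C V]
      have tmc2 : (W * centProj a C).trace = (W * C).trace := by
        rw [Matrix.trace_mul_comm W (centProj a C), claim2, Matrix.trace_mul_comm C W]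
      have halg := alg_cancel U V W C rfl
      simp only [Matrix.sub_mul, Matrix.mul_sub, Matrix.trace_sub] at halg ⊢
      linear_combination halg - claim1 - tmc1 + claim2 + tmc2
    exact hzero ▸ big
  have hFconst : ∀ x y, F x = F y :=
    is_const_of_deriv_eq_zero (fun x => (hFd x).differentiableAt) (fun x => (hFd x).deriv)
  -- limits at -∞
  have hwlim : Tendsto (Tu a u v) atBot (𝓝 0) := by
    have hIic : (⋂ t : ℝ, Set.Iic (-t)) = ∅ := by
      ext y
      simp only [Set.mem_iInter, Set.mem_Iic, Set.mem_empty_iff_false, iff_false, not_forall]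
      exact ⟨-y + 1, by linarith⟩
    have h2 := MeasureTheory.tendsto_setIntegral_of_antitone (μ := volume) (f := h)
      (s := fun t : ℝ => Set.Iic (-t)) (fun _ => measurableSet_Iic)
      (fun s t hst => Set.Iic_subset_Iic.mpr (by linarith))
      ⟨0, hInt.integrableOn⟩
    rw [hIic] at h2
    simp only [MeasureTheory.setIntegral_empty] at h2
    have h3 := h2.comp tendsto_neg_atBot_atTop
    have h4 : Tendsto (fun x : ℝ => ∫ y in Set.Iic x, h y) atBot (𝓝 0) := by
      refine h3.congr fun x => ?_
      simp [Function.comp]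
    exact h4
  have hvlim : Tendsto v atBot (𝓝 0) := by
    have h1 : Tendsto v (cocompact ℝ) (𝓝 0) := by
      have h0 := φv.toZeroAtInfty.zero_at_infty'
      refine h0.congr fun y => ?_
      exact congrFun hφv y
    exact h1.mono_left (by rw [cocompact_eq_atBot_atTop]; exact le_sup_left)
  have hve : ∀ i j : Fin n, Tendsto (fun x => v x i j) atBot (𝓝 0) := by
    intro i j
    have := ((eCLM n i j).continuous.tendsto 0).comp hvlim
    rwa [map_zero] at this
  have hwe : ∀ i j : Fin n, Tendsto (fun x => Tu a u v x i j) atBot (𝓝 0) := by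
    intro i j
    have := ((eCLM n i j).continuous.tendsto 0).comp hwlim
    rwa [map_zero] at this
  have hFlim : Tendsto F atBot (𝓝 0) := by
    have h1 : Tendsto F atBot (𝓝 (∑ i : Fin n, ∑ j : Fin n, ((0:ℂ) * 0 + 0 * 0))) := by
      apply tendsto_finset_sum
      intro i _
      apply tendsto_finset_sum
      intro j _
      exact ((hve i j).mul (hve j i)).add ((hwe i j).mul (hwe j i))
    simpa using h1
  have hF0 : ∀ x, F x = 0 := by
    intro x
    have h1 : Tendsto F atBot (𝓝 (F x)) := by
      have hc : F = fun _ => F x := funext fun y => hFconst y x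
      rw [hc]
      exact tendsto_const_nhds
    exact tendsto_nhds_unique h1 hFlim
  -- conclusion
  funext x
  ext i j
  have hre := congrArg Complex.re (hF0 x)
  have hterm : ∀ i j : Fin n, (v x i j * v x j i + Tu a u v x i j * Tu a u v x j i).re
      = -(Complex.normSq (v x i j) + Complex.normSq (Tu a u v x i j)) := by
    intro i j
    rw [skew_entry (hvP x).1 i j, hwSkew x i j]
    simp only [mul_neg, Complex.mul_conj]
    simp only [Complex.add_re, Complex.neg_re, Complex.ofReal_re]
    ring
  have hsum : ∑ i : Fin n, ∑ j : Fin n,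
      (Complex.normSq (v x i j) + Complex.normSq (Tu a u v x i j)) = 0 := by
    have h2 : (F x).re = -∑ i : Fin n, ∑ j : Fin n,
        (Complex.normSq (v x i j) + Complex.normSq (Tu a u v x i j)) := by
      rw [hF, Complex.re_sum]
      rw [← Finset.sum_neg_distrib]
      refine Finset.sum_congr rfl fun i _ => ?_
      rw [Complex.re_sum, ← Finset.sum_neg_distrib]
      exact Finset.sum_congr rfl fun j _ => hterm i j
    rw [hre] at h2
    simp only [Complex.zero_re] at h2
    linarith [h2]
  have hnonneg : ∀ p ∈ (Finset.univ : Finset (Fin n)), (0:ℝ) ≤ ∑ j : Fin n,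
      (Complex.normSq (v x p j) + Complex.normSq (Tu a u v x p j)) :=
    fun p _ => Finset.sum_nonneg fun j _ =>
      add_nonneg (Complex.normSq_nonneg _) (Complex.normSq_nonneg _)
  have hrow := (Finset.sum_eq_zero_iff_of_nonneg hnonneg).mp hsum i (Finset.mem_univ i)
  have hentry := (Finset.sum_eq_zero_iff_of_nonneg (fun q _ =>
    add_nonneg (Complex.normSq_nonneg _) (Complex.normSq_nonneg _))).mp hrow j
    (Finset.mem_univ j)
  have hvsq : Complex.normSq (v x i j) = 0 := by
    nlinarith [Complex.normSq_nonneg (v x i j), Complex.normSq_nonneg (Tu a u v x i j)]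
  simpa using Complex.normSq_eq_zero.mp hvsq
end
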